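/- Let V be an optimal prefix-free machine such that V⁻¹(s) is a finite set for every finite binary string s. Then the function s ↦ #V⁻¹(s) is not bounded above on {0,1}*; that is, for every M ∈ ℕ there exists s with #V⁻¹(s) > M. -/

import Mathlib

open scoped ENNReal

/-- A set of binary strings is prefix-free: no element is a proper prefix of another. -/
def PrefixFreeSet (S : Set (List Bool)) : Prop :=
  ∀ p ∈ S, ∀ q ∈ S, p <+: q → p = q

/-- A prefix-free machine: a partial recursive function on binary strings
whose domain is a prefix-free set. -/
def PFMachine (C : List Bool →. List Bool) : Prop :=
  Partrec C ∧ PrefixFreeSet C.Dom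

/-- `Hm C s` is the length of a shortest program `p` with `C p = s` (`∞` if none). -/
noncomputable def Hm (C : List Bool →. List Bool) (s : List Bool) : ℕ∞ :=
  sInf ((fun p : List Bool => (p.length : ℕ∞)) '' {p | s ∈ C p})

/-- An optimal prefix-free machine: for every prefix-free machine `C` there is `d ∈ ℕ`
such that every `p ∈ dom C` has a `q` with `U q = C p` and `|q| ≤ |p| + d`. -/
def OptimalPFM (U : List Bool →. List Bool) : Prop :=
  PFMachine U ∧ ∀ C : List Bool →. List Bool, PFMachine C →
    ∃ d : ℕ, ∀ p s, s ∈ C p → ∃ q : List Bool, s ∈ U q ∧ q.length ≤ p.length + d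

/-- The binary string identified with `n : ℕ` via `φ(s) = (the dyadic integer 1s) − 1`. -/
def strOfNat (n : ℕ) : List Bool := ((n + 1).bits.dropLast).reverse

open Encodable Nat.Partrec.Code
open Nat.Partrec (Code)

namespace CFU


/-- the string `1^k 0` -/
def pat (k : ℕ) : List Bool := List.replicate k true ++ [false]

@[simp] lemma pat_length (k : ℕ) : (pat k).length = k + 1 := by simp [pat]

lemma pat_injective : Function.Injective pat := by
  intro a b h
  have := congrArg List.length h
  simpa using this

lemma pat_not_prefix {a b : ℕ} (h : pat a <+: pat b) : a = b := by
  have hl : a + 1 ≤ b + 1 := by simpa using h.length_le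
  by_contra hne
  have hab : a < b := lt_of_le_of_ne (Nat.succ_le_succ_iff.mp hl) hne
  have h1 : (pat a)[a]'(by simp) = (pat b)[a]'(by simp; omega) := h.getElem (by simp)
  have h2 : (pat a)[a]'(by simp) = false := by
    simp [pat, List.getElem_append_right, List.length_replicate]
  have h3 : (pat b)[a]'(by simp; omega) = true := by
    have : a < (List.replicate b true).length := by simpa using hab
    simp [pat, List.getElem_append, hab]
  rw [h2, h3] at h1
  exact Bool.false_ne_true h1

def decPat (p : List Bool) : Option ℕ :=
  if p = pat (p.length - 1) then some (p.length - 1) else none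

@[simp] lemma decPat_pat (k : ℕ) : decPat (pat k) = some k := by
  simp [decPat]

lemma decPat_eq_some {p : List Bool} {k : ℕ} (h : decPat p = some k) : p = pat k := by
  rw [decPat] at h
  split at h
  · rename_i heq
    obtain rfl : p.length - 1 = k := by simpa using h
    exact heq
  · simp at h

lemma primrec_decPat : Primrec decPat := by
  have hrep : Primrec (fun p : List Bool => List.replicate (p.length - 1) true) := by
    have : Primrec (fun p : List Bool => (List.range (p.length - 1)).map (fun _ => true)) :=
      Primrec.list_map (Primrec.list_range.comp (Primrec.pred.comp Primrec.list_length))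
        ((Primrec.const true).comp Primrec.fst).to₂
    exact this.of_eq fun p => by
      induction (p.length - 1) with
      | zero => simp
      | succ n ih => rw [List.range_succ, List.map_append, ih, List.replicate_succ']; simp
  have hpat : Primrec (fun p : List Bool => pat (p.length - 1)) := by
    unfold pat
    exact Primrec.list_append.comp hrep (Primrec.const [false])
  have heq : PrimrecPred (fun p : List Bool => p = pat (p.length - 1)) :=
    Primrec.eq.comp Primrec.id hpat
  exact (Primrec.ite heq
    (Primrec.option_some.comp (Primrec.pred.comp Primrec.list_length))
    (Primrec.const none))

/-- machine template: defined exactly on strings `pat k`, acting as `F k`. -/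
def patM (F : ℕ →. List Bool) : List Bool →. List Bool :=
  fun p => (Part.ofOption (decPat p)).bind F

lemma patM_partrec {F : ℕ →. List Bool} (hF : Partrec F) : Partrec (patM F) :=
  (Computable.ofOption primrec_decPat.to_comp).bind (hF.comp Computable.snd).to₂

lemma mem_patM {F : ℕ →. List Bool} {k : ℕ} {s : List Bool} :
    s ∈ patM F (pat k) ↔ s ∈ F k := by
  simp [patM]
  exact Part.mem_bind_iff.trans ⟨fun ⟨a, ha, h⟩ => (Part.mem_some_iff.mp ha) ▸ h, fun h => ⟨k, Part.mem_some k, h⟩⟩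

lemma patM_dom {F : ℕ →. List Bool} {p : List Bool} (h : (patM F p).Dom) :
    ∃ k, p = pat k := by
  have h1 : (Part.ofOption (decPat p)).Dom := h.fst
  rw [Part.ofOption_dom] at h1
  obtain ⟨a, ha⟩ := Option.isSome_iff_exists.mp h1
  exact ⟨a, decPat_eq_some ha⟩

lemma patM_PFM {F : ℕ →. List Bool} (hF : Partrec F) : PFMachine (patM F) := by
  refine ⟨patM_partrec hF, ?_⟩
  intro p hp q hq hpq
  obtain ⟨a, rfl⟩ := patM_dom hp
  obtain ⟨b, rfl⟩ := patM_dom hq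
  exact congrArg pat (pat_not_prefix hpq)




lemma filterMap_eq_flatMap {α β : Type*} (f : α → Option β) (l : List α) :
    l.filterMap f = l.flatMap fun a => (f a).toList := by
  induction l with
  | nil => simp
  | cons a t ih => cases h : f a <;> simp [List.filterMap_cons, h, ih]

lemma filterMap_if_eq_filter {α : Type*} (P : α → Prop) [DecidablePred P] (l : List α) :
    (l.filterMap fun a => if P a then some a else none) = l.filter (fun a => decide (P a)) := by
  induction l with
  | nil => simp
  | cons a t ih => by_cases h : P a <;> simp [List.filterMap_cons, List.filter_cons, h, ih]

/-- Bool membership in a fixed list. -/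
def memB (l : List (List Bool)) (a : List Bool) : Bool :=
  l.foldr (fun b r => (decide (b = a)) || r) false

lemma memB_iff {l : List (List Bool)} {a : List Bool} : memB l a = true ↔ a ∈ l := by
  induction l with
  | nil => simp [memB]
  | cons b t ih => simp [memB, List.foldr_cons] at ih ⊢; rw [ih]; tauto

lemma primrec_memB (l : List (List Bool)) : Primrec (memB l) := by
  induction l with
  | nil => exact (Primrec.const false).of_eq (fun a => rfl)
  | cons b t ih =>
      have : Primrec fun a : List Bool => (decide (b = a)) || memB t a :=
        Primrec.or.comp (Primrec.eq.comp (Primrec.const b) Primrec.id).decide ih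
      exact this.of_eq fun a => rfl

/-- programs (as strings) seen by stage `t` to output `s`, for code `c`. -/
def seen (c : Code) (t : ℕ) (s : List Bool) : List (List Bool) :=
  (List.range t).filterMap fun m =>
    (decode₂ (List Bool) m).bind fun p =>
      if evaln t c m = some (encode s) then some p else none

lemma seen_some {c : Code} {t m : ℕ} {s p : List Bool}
    (h : ((decode₂ (List Bool) m).bind fun p' =>
      if evaln t c m = some (encode s) then some p' else none) = some p) :
    m = encode p ∧ evaln t c m = some (encode s) := by
  cases hd : decode₂ (List Bool) m with
  | none => rw [hd] at h; simp at h
  | some q =>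
      rw [hd, Option.bind_some] at h
      split at h
      · cases h
        exact ⟨(mem_decode₂.mp (by rw [hd]; rfl)).symm, by assumption⟩
      · simp at h

lemma mem_seen {c : Code} {t : ℕ} {s p : List Bool} :
    p ∈ seen c t s ↔ encode p < t ∧ evaln t c (encode p) = some (encode s) := by
  constructor
  · intro h
    simp only [seen, List.mem_filterMap, List.mem_range] at h
    obtain ⟨m, hm, h2⟩ := h
    obtain ⟨rfl, h3⟩ := seen_some h2
    exact ⟨hm, h3⟩
  · rintro ⟨h1, h2⟩
    simp only [seen, List.mem_filterMap, List.mem_range]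
    refine ⟨encode p, h1, ?_⟩
    rw [show decode₂ (List Bool) (encode p) = some p from mem_decode₂.mpr rfl,
      Option.bind_some, if_pos h2]

lemma seen_nodup (c : Code) (t : ℕ) (s : List Bool) : (seen c t s).Nodup := by
  apply List.Nodup.filterMap _ List.nodup_range
  intro a a' b hb hb'
  rw [Option.mem_def] at hb hb'
  rw [(seen_some hb).1, (seen_some hb').1]

lemma primrec_seen (c : Code) : Primrec₂ (seen c) := by
  have cond : PrimrecPred fun x : ((ℕ × List Bool) × ℕ) × List Bool =>
      evaln x.1.1.1 c x.1.2 = some (encode x.1.1.2) := by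
    apply Primrec.eq.comp
    · exact primrec_evaln.comp (((Primrec.fst.comp (Primrec.fst.comp Primrec.fst)).pair
        (Primrec.const c)).pair (Primrec.snd.comp Primrec.fst))
    · exact Primrec.option_some.comp
        (Primrec.encode.comp (Primrec.snd.comp (Primrec.fst.comp Primrec.fst)))
  have inner2 : Primrec₂ fun (x : (ℕ × List Bool) × ℕ) (p : List Bool) =>
      if evaln x.1.1 c x.2 = some (encode x.1.2) then some p else none :=
    Primrec.ite cond (Primrec.option_some.comp Primrec.snd) (Primrec.const none)
  have inner : Primrec₂ fun (ts : ℕ × List Bool) (m : ℕ) =>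
      ((decode₂ (List Bool) m).bind fun p =>
        if evaln ts.1 c m = some (encode ts.2) then some p else none).toList :=
    (Primrec.optionToList.comp
      (Primrec.option_bind (Primrec.decode₂.comp Primrec.snd) inner2)).to₂
  have : Primrec fun ts : ℕ × List Bool => seen c ts.1 ts.2 := by
    have := Primrec.list_flatMap (Primrec.list_range.comp Primrec.fst) inner
    refine this.of_eq fun ts => ?_
    rw [seen, filterMap_eq_flatMap]
  exact this.to₂

/-- the search predicate. `w` codes a pair (stage, candidate string). -/
def qB (c : Code) (Bl : List (List Bool)) (N : ℕ) (n w : ℕ) : Bool :=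
  match decode₂ (List Bool) w.unpair.2 with
  | Option.none => false
  | Option.some s =>
      !(memB Bl s) && decide (N ≤ (seen c w.unpair.1 s).length) &&
        decide ((seen c w.unpair.1 s).filter (fun p => decide (n < p.length))
          = seen c w.unpair.1 s)

lemma qB_iff {c : Code} {Bl : List (List Bool)} {N n w : ℕ} :
    qB c Bl N n w = true ↔ ∃ s : List Bool, decode₂ (List Bool) w.unpair.2 = some s ∧
      s ∉ Bl ∧ N ≤ (seen c w.unpair.1 s).length ∧
      ∀ p ∈ seen c w.unpair.1 s, n < p.length := by
  rw [qB]
  cases h : decode₂ (List Bool) w.unpair.2 with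
  | none => simp
  | some s =>
      simp only [Bool.and_eq_true, Bool.not_eq_true', decide_eq_true_eq, Option.some.injEq]
      constructor
      · rintro ⟨⟨h1, h2⟩, h3⟩
        refine ⟨s, rfl, fun hmem => by rw [memB_iff.mpr hmem] at h1; simp at h1,
          h2, ?_⟩
        have := List.filter_eq_self.mp h3
        intro p hp; simpa using this p hp
      · rintro ⟨s', hs', h1, h2, h3⟩
        subst hs'
        refine ⟨⟨?_, h2⟩, List.filter_eq_self.mpr fun p hp => by simpa using h3 p hp⟩
        rw [Bool.eq_false_iff]
        intro hcon
        exact h1 (memB_iff.mp hcon)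

lemma primrec_qB (c : Code) (Bl : List (List Bool)) (N : ℕ) : Primrec₂ (qB c Bl N) := by
  have hu1 : Primrec fun w : ℕ => w.unpair.1 := Primrec.fst.comp Primrec.unpair
  have hu2 : Primrec fun w : ℕ => w.unpair.2 := Primrec.snd.comp Primrec.unpair
  -- x = ((n, w), s)
  have hseen : Primrec fun x : (ℕ × ℕ) × List Bool => seen c x.1.2.unpair.1 x.2 :=
    (primrec_seen c).comp (hu1.comp (Primrec.snd.comp Primrec.fst)) Primrec.snd
  have h1' : Primrec fun x : (ℕ × ℕ) × List Bool => !(memB Bl x.2) :=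
    Primrec.not.comp ((primrec_memB Bl).comp Primrec.snd)
  have h2 : PrimrecPred fun x : (ℕ × ℕ) × List Bool =>
      N ≤ (seen c x.1.2.unpair.1 x.2).length :=
    Primrec.nat_le.comp (Primrec.const N) (Primrec.list_length.comp hseen)
  have hfil : Primrec fun x : (ℕ × ℕ) × List Bool =>
      (seen c x.1.2.unpair.1 x.2).filter (fun p => decide (x.1.1 < p.length)) := by
    have hif : Primrec₂ fun (x : (ℕ × ℕ) × List Bool) (p : List Bool) =>
        if x.1.1 < p.length then some p else none :=
      Primrec.ite
        (Primrec.nat_lt.comp (Primrec.fst.comp (Primrec.fst.comp Primrec.fst))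
          (Primrec.list_length.comp Primrec.snd))
        (Primrec.option_some.comp Primrec.snd) (Primrec.const none)
    have hfm := Primrec.list_flatMap hseen
      ((Primrec.optionToList.comp (hif.comp Primrec.fst Primrec.snd)).to₂)
    refine hfm.of_eq fun x => ?_
    rw [← filterMap_eq_flatMap, filterMap_if_eq_filter]
  have h3 : PrimrecPred fun x : (ℕ × ℕ) × List Bool =>
      (seen c x.1.2.unpair.1 x.2).filter (fun p => decide (x.1.1 < p.length))
        = seen c x.1.2.unpair.1 x.2 :=
    Primrec.eq.comp hfil hseen
  have hsome : Primrec fun x : (ℕ × ℕ) × List Bool =>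
      (!(memB Bl x.2) && decide (N ≤ (seen c x.1.2.unpair.1 x.2).length)) &&
      decide ((seen c x.1.2.unpair.1 x.2).filter (fun p => decide (x.1.1 < p.length))
        = seen c x.1.2.unpair.1 x.2) :=
    Primrec.and.comp (Primrec.and.comp h1' h2.decide) h3.decide
  have := Primrec.option_casesOn
    (Primrec.decode₂.comp (hu2.comp Primrec.snd) :
      Primrec fun nw : ℕ × ℕ => decode₂ (List Bool) nw.2.unpair.2)
    (Primrec.const false) hsome.to₂
  have final : Primrec fun nw : ℕ × ℕ => qB c Bl N nw.1 nw.2 :=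
    this.of_eq fun nw => by
      cases h : decode₂ (List Bool) nw.2.unpair.2 <;> simp [qB, h]
  exact final.to₂



lemma primrec_two_pow : Primrec fun k : ℕ => 2 ^ k := by
  have h := Primrec.nat_rec' (Primrec.id (α := ℕ)) (Primrec.const 1)
    ((Primrec.nat_double).comp (Primrec.snd.comp Primrec.snd)).to₂
  refine h.of_eq fun k => ?_
  show (Nat.rec 1 (fun _ IH => 2 * IH) k : ℕ) = 2 ^ k
  induction k with
  | zero => rfl
  | succ n ih => rw [Nat.rec_add_one, ih, pow_succ, Nat.mul_comm]

lemma primrec_replicate_true : Primrec (fun n : ℕ => List.replicate n true) := by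
  have : Primrec (fun n : ℕ => (List.range n).map (fun _ => true)) :=
    Primrec.list_map Primrec.list_range ((Primrec.const true).comp Primrec.fst).to₂
  refine this.of_eq fun n => ?_
  induction n with
  | zero => simp
  | succ n ih => rw [List.range_succ, List.map_append, ih, List.replicate_succ']; simp

lemma exists_mem_rfind {p : ℕ → Bool} (h : ∃ n, p n = true) :
    ∃ n, n ∈ Nat.rfind (fun n => (Part.some (p n) : Part Bool)) ∧ p n = true := by
  obtain ⟨n, hn⟩ := h
  have hdom : (Nat.rfind fun n => (Part.some (p n) : Part Bool)).Dom :=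
    Nat.rfind_dom.mpr ⟨n, by simpa using hn, fun {m} _ => trivial⟩
  refine ⟨(Nat.rfind _).get hdom, Part.get_mem hdom, ?_⟩
  have := Nat.rfind_spec (Part.get_mem hdom)
  simpa using this

end CFU

/-- If `V` is optimal and every `V⁻¹(s)` is finite, then `s ↦ #V⁻¹(s)` is unbounded. -/
theorem card_fiber_unbounded (V : List Bool →. List Bool) (hV : OptimalPFM V)
    (hfin : ∀ s, {p : List Bool | s ∈ V p}.Finite) :
    ∀ M : ℕ, ∃ s : List Bool, M < {p : List Bool | s ∈ V p}.ncard := by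
  classical
  intro M
  by_contra hcon
  push_neg at hcon
  -- a code for V
  obtain ⟨c, hceq⟩ := Nat.Partrec.Code.exists_code.1 hV.1.1
  have hc : ∀ p s : List Bool, s ∈ V p ↔ encode s ∈ eval c (encode p) := by
    intro p s
    have he : eval c (encode p) = (V p).map encode := by
      rw [hceq]; simp [Encodable.encodek]
    rw [he]
    simp [Part.mem_map_iff, encode_injective.eq_iff]
  -- Step A : every `replicate n true` has a program
  have hF₁ : Partrec ((fun k : ℕ => List.replicate k true) : ℕ →. List Bool) :=
    CFU.primrec_replicate_true.to_comp.partrec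
  obtain ⟨d₁, hd₁⟩ := hV.2 _ (CFU.patM_PFM hF₁)
  have hA : ∀ n : ℕ, ∃ q, List.replicate n true ∈ V q := by
    intro n
    obtain ⟨q, hq, -⟩ := hd₁ (CFU.pat n) (List.replicate n true)
      (CFU.mem_patM.mpr (by exact Part.mem_some _))
    exact ⟨q, hq⟩
  -- Step B : levels
  set S : ℕ → Set (List Bool) := fun k => {s | {p | s ∈ V p}.ncard = k} with hSdef
  have hSinf : ∃ k, 1 ≤ k ∧ k ≤ M ∧ (S k).Infinite := by
    by_contra hS
    push_neg at hS
    have hTfin : (⋃ k ∈ Finset.Icc 1 M, S k).Finite :=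
      Set.Finite.biUnion (Finset.Icc 1 M).finite_toSet (fun k hk => by
        rw [Finset.mem_coe, Finset.mem_Icc] at hk
        exact hS k hk.1 hk.2)
    have hsub : Set.range (fun n : ℕ => List.replicate n true) ⊆
        ⋃ k ∈ Finset.Icc 1 M, S k := by
      rintro _ ⟨n, rfl⟩
      have h1 : 0 < {p | List.replicate n true ∈ V p}.ncard :=
        (Set.ncard_pos (hfin _)).mpr (by obtain ⟨q, hq⟩ := hA n; exact ⟨q, hq⟩)
      exact Set.mem_biUnion (Finset.mem_Icc.mpr ⟨h1, hcon _⟩) rfl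
    have hinj : Function.Injective (fun n : ℕ => List.replicate n true) := by
      intro a b h; simpa using congrArg List.length h
    exact Set.infinite_range_of_injective hinj (hTfin.subset hsub)
  obtain ⟨k₀, hk₀1, hk₀M, hk₀inf⟩ := hSinf
  set N := Nat.findGreatest (fun k => (S k).Infinite) M with hNdef
  have hNinf : (S N).Infinite := Nat.findGreatest_spec (P := fun k => (S k).Infinite) hk₀M hk₀inf
  have hN1 : 1 ≤ N := le_trans hk₀1 (Nat.le_findGreatest (P := fun k => (S k).Infinite) hk₀M hk₀inf)
  have hNfin : ∀ j, N < j → (S j).Finite := by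
    intro j hj
    rcases le_or_gt j M with h | h
    · exact Set.not_infinite.mp (Nat.findGreatest_is_greatest (P := fun k => (S k).Infinite) hj h)
    · have : S j = ∅ := Set.eq_empty_iff_forall_notMem.mpr fun s hs => by
        have := hcon s
        rw [hSdef] at hs
        simp only [Set.mem_setOf_eq] at hs
        omega
      rw [this]; exact Set.finite_empty
  set B : Set (List Bool) := {s | N < {p | s ∈ V p}.ncard} with hBdef
  have hBfin : B.Finite := by
    have hsub : B ⊆ ⋃ j ∈ Finset.Icc (N + 1) M, S j := by
      intro s hs
      rw [hBdef] at hs; simp only [Set.mem_setOf_eq] at hs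
      exact Set.mem_biUnion (Finset.mem_Icc.mpr ⟨by omega, hcon s⟩) rfl
    refine (Set.Finite.biUnion (Finset.Icc (N + 1) M).finite_toSet fun j hj => ?_).subset hsub
    rw [Finset.mem_coe, Finset.mem_Icc] at hj
    exact hNfin j (by omega)
  set Bl : List (List Bool) := hBfin.toFinset.toList with hBldef
  have hBl : ∀ s, s ∈ Bl ↔ N < {p | s ∈ V p}.ncard := by
    intro s
    rw [hBldef, Finset.mem_toList, Set.Finite.mem_toFinset]
    exact Iff.rfl
  -- seen lists consist of genuine programs
  have hseen_sub : ∀ (t : ℕ) (s p : List Bool), p ∈ CFU.seen c t s → s ∈ V p := by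
    intro t s p hp
    exact (hc p s).mpr (evaln_sound (CFU.mem_seen.mp hp).2)
  -- termination of the search
  have hterm : ∀ n, ∃ w, CFU.qB c Bl N n w = true := by
    intro n
    have hU : {s : List Bool | ∃ p, s ∈ V p ∧ p.length ≤ n}.Finite := by
      have hsub : {s : List Bool | ∃ p, s ∈ V p ∧ p.length ≤ n} ⊆
          ⋃ p ∈ {p : List Bool | p.length ≤ n}, {s | s ∈ V p} := by
        rintro s ⟨p, h1, h2⟩
        exact Set.mem_biUnion h2 h1
      refine ((List.finite_length_le Bool n).biUnion fun p _ => ?_).subset hsub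
      exact Set.Subsingleton.finite fun a ha b hb => Part.mem_unique ha hb
    obtain ⟨s, hsS, hsU⟩ := (hNinf.diff hU).nonempty
    have hex : ∀ p : List Bool, s ∈ V p → ∃ u, encode s ∈ evaln u c (encode p) :=
      fun p hp => evaln_complete.mp ((hc p s).mp hp)
    set f : List Bool → ℕ := fun p => if h : s ∈ V p then Nat.find (hex p h) else 0 with hfdef
    set t : ℕ := ((hfin s).toFinset.sup fun p => max (f p) (encode p)) + 1 with htdef
    have hall : ∀ p : List Bool, s ∈ V p →
        encode p < t ∧ evaln t c (encode p) = some (encode s) := by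
      intro p hp
      have hmem : p ∈ (hfin s).toFinset := (Set.Finite.mem_toFinset _).mpr hp
      have hle : max (f p) (encode p) ≤ (hfin s).toFinset.sup fun p => max (f p) (encode p) :=
        Finset.le_sup (f := fun p => max (f p) (encode p)) hmem
      have hle2 := le_max_right (f p) (encode p)
      have hle1 := le_max_left (f p) (encode p)
      constructor
      · omega
      · have h1 : encode s ∈ evaln (f p) c (encode p) := by
          rw [hfdef]; simp only [hp, dif_pos]
          exact Nat.find_spec (hex p hp)
        exact evaln_mono (by omega) h1
    refine ⟨Nat.pair t (encode s), CFU.qB_iff.mpr ⟨s, ?_, ?_, ?_, ?_⟩⟩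
    · rw [Nat.unpair_pair]
      exact mem_decode₂.mpr rfl
    · intro hmem
      rw [hBl s] at hmem
      have : {p | s ∈ V p}.ncard = N := hsS
      omega
    · rw [Nat.unpair_pair]
      show N ≤ (CFU.seen c t s).length
      have hsubF : (hfin s).toFinset ⊆ (CFU.seen c t s).toFinset := by
        intro p hp
        rw [Set.Finite.mem_toFinset] at hp
        exact List.mem_toFinset.mpr (CFU.mem_seen.mpr
          ⟨(hall p hp).1, (hall p hp).2⟩)
      have h1 : {p | s ∈ V p}.ncard = (hfin s).toFinset.card :=
        Set.ncard_eq_toFinset_card _ (hfin s)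
      have h2 : (hfin s).toFinset.card ≤ (CFU.seen c t s).toFinset.card :=
        Finset.card_le_card hsubF
      have h3 : (CFU.seen c t s).toFinset.card ≤ (CFU.seen c t s).length :=
        (CFU.seen c t s).toFinset_card_le
      have h4 : {p | s ∈ V p}.ncard = N := hsS
      omega
    · rw [Nat.unpair_pair]
      show ∀ p ∈ CFU.seen c t s, n < p.length
      intro p hp
      have hVp := hseen_sub t s p hp
      by_contra hcontra
      exact hsU ⟨p, hVp, by omega⟩
  -- key property of successful searches
  have hkey : ∀ n w, CFU.qB c Bl N n w = true → ∀ s, decode₂ (List Bool) w.unpair.2 = some s →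
      ∀ p, s ∈ V p → n < p.length := by
    intro n w hq s hs p hp
    obtain ⟨s', hs', hnB, hlen, hall⟩ := CFU.qB_iff.mp hq
    rw [hs] at hs'
    obtain rfl : s = s' := by injection hs'
    rw [hBl s] at hnB
    have hcardle : {p | s ∈ V p}.ncard ≤ N := by omega
    have hsub : (CFU.seen c w.unpair.1 s).toFinset ⊆ (hfin s).toFinset := by
      intro p' hp'
      exact (Set.Finite.mem_toFinset _).mpr (hseen_sub _ _ _ (List.mem_toFinset.mp hp'))
    have hcard : (hfin s).toFinset.card ≤ (CFU.seen c w.unpair.1 s).toFinset.card := by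
      rw [List.toFinset_card_of_nodup (CFU.seen_nodup c _ s)]
      have h1 : {p | s ∈ V p}.ncard = (hfin s).toFinset.card :=
        Set.ncard_eq_toFinset_card _ (hfin s)
      omega
    have heq := Finset.eq_of_subset_of_card_le hsub hcard
    have hpseen : p ∈ CFU.seen c w.unpair.1 s := by
      have h1 : p ∈ (hfin s).toFinset := (Set.Finite.mem_toFinset _).mpr hp
      rw [← heq] at h1
      exact List.mem_toFinset.mp h1
    exact hall p hpseen
  -- the diagonal machine
  set F₂ : ℕ →. List Bool := fun k =>
    (Nat.rfind fun w => (Part.some (CFU.qB c Bl N (2 ^ k) w) : Part Bool)).bind fun w =>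
      Part.ofOption (decode₂ (List Bool) w.unpair.2) with hF₂def
  have hF₂ : Partrec F₂ := by
    apply Partrec.bind
    · apply Partrec.rfind
      exact (((CFU.primrec_qB c Bl N).to_comp).comp
        (CFU.primrec_two_pow.to_comp.comp Computable.fst) Computable.snd).to₂.partrec₂
    · exact (Computable.ofOption (Primrec.decode₂.to_comp.comp
        (((Primrec.snd.comp Primrec.unpair).to_comp).comp Computable.snd))).to₂
  obtain ⟨d, hd⟩ := hV.2 _ (CFU.patM_PFM hF₂)
  set k := d + 2 with hkdef
  obtain ⟨w, hwmem, hwq⟩ := CFU.exists_mem_rfind (hterm (2 ^ k))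
  obtain ⟨s, hsdec, -, -, -⟩ := CFU.qB_iff.mp hwq
  have hsC₂ : s ∈ CFU.patM F₂ (CFU.pat k) := by
    rw [CFU.mem_patM, hF₂def]
    refine Part.mem_bind_iff.mpr ⟨w, hwmem, ?_⟩
    rw [Part.mem_ofOption]
    exact hsdec ▸ rfl
  obtain ⟨q, hqV, hqlen⟩ := hd (CFU.pat k) s hsC₂
  have h1 : 2 ^ k < q.length := hkey (2 ^ k) w hwq s hsdec q hqV
  have h2 : q.length ≤ k + 1 + d := by
    have := hqlen
    rw [CFU.pat_length] at this
    omega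
  have h3 : 2 ^ k = 4 * 2 ^ d := by rw [hkdef, pow_add]; ring
  have h4 : d < 2 ^ d := Nat.lt_two_pow_self
  omega
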